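/- Let κ, ν, τ > 0 and fix w_s ∈ [0, 1]. Define M(t) = √(κ² + 2κw_s/τ + t²/τ²) and Ĵ(t) = −w_s/τ + log(I_ν(M(t))/M(t)^ν) − log(I_ν(κ)/κ^ν). Then Ĵ is strictly increasing on (0, 1]. -/

import Mathlib

/-- The modified Bessel function of the first kind of order `ν`. -/
noncomputable def besselI (ν m : ℝ) : ℝ :=
  ∑' k : ℕ, (1 / ((Nat.factorial k : ℝ) * Real.Gamma (ν + k + 1))) *
    (m / 2) ^ (2 * (k : ℝ) + ν)

/-- `M(t) = √(κ² + 2κw_s/τ + t²/τ²)`. -/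
noncomputable def Mt (κ τ ws t : ℝ) : ℝ :=
  Real.sqrt (κ ^ 2 + 2 * κ * ws / τ + t ^ 2 / τ ^ 2)

/-- `Ĵ(t) = −w_s/τ + log(I_ν(M(t))/M(t)^ν) − log(I_ν(κ)/κ^ν)`. -/
noncomputable def JhatT (κ ν τ ws t : ℝ) : ℝ :=
  -ws / τ + Real.log (besselI ν (Mt κ τ ws t) / (Mt κ τ ws t) ^ ν) -
    Real.log (besselI ν κ / κ ^ ν)

namespace BesselAux

noncomputable def c (ν : ℝ) (k : ℕ) : ℝ :=
  1 / ((Nat.factorial k : ℝ) * Real.Gamma (ν + k + 1))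

lemma c_pos (ν : ℝ) (hν : 0 < ν) (k : ℕ) : 0 < c ν k := by
  have h1 : (0:ℝ) < Nat.factorial k := by exact_mod_cast Nat.factorial_pos k
  have h2 : 0 < Real.Gamma (ν + k + 1) :=
    Real.Gamma_pos_of_pos (by positivity)
  exact div_pos one_pos (mul_pos h1 h2)

lemma gamma_ge (ν : ℝ) (hν : 0 < ν) (k : ℕ) :
    (Nat.factorial k : ℝ) * Real.Gamma (ν + 1) ≤ Real.Gamma (ν + k + 1) := by
  induction k with
  | zero => simp
  | succ n ih =>
    have hne : ν + n + 1 ≠ 0 := by positivity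
    have hG : Real.Gamma (ν + ((n:ℝ) + 1) + 1) = (ν + n + 1) * Real.Gamma (ν + n + 1) := by
      rw [show ν + ((n:ℝ) + 1) + 1 = (ν + (n:ℝ) + 1) + 1 by ring, Real.Gamma_add_one hne]
    have hGpos : 0 < Real.Gamma (ν + n + 1) := Real.Gamma_pos_of_pos (by positivity)
    push_cast [Nat.factorial_succ]
    rw [hG]
    nlinarith [Nat.cast_nonneg (α := ℝ) n, Nat.cast_nonneg (α := ℝ) n.factorial]

lemma summable_S (ν : ℝ) (hν : 0 < ν) (x : ℝ) (hx : 0 ≤ x) :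
    Summable (fun k : ℕ => c ν k * x ^ k) := by
  have hGpos : 0 < Real.Gamma (ν + 1) := Real.Gamma_pos_of_pos (by positivity)
  apply Summable.of_nonneg_of_le
    (fun k => mul_nonneg (c_pos ν hν k).le (pow_nonneg hx k))
    (fun k => ?_)
    (((Real.summable_pow_div_factorial x).mul_left (1 / Real.Gamma (ν + 1))))
  · have hfac : (0:ℝ) < Nat.factorial k := by exact_mod_cast Nat.factorial_pos k
    have h2 : 0 < Real.Gamma (ν + k + 1) := Real.Gamma_pos_of_pos (by positivity)
    have hle : (Nat.factorial k : ℝ) * Real.Gamma (ν + 1) ≤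
        (Nat.factorial k : ℝ) * Real.Gamma (ν + k + 1) := by
      calc (Nat.factorial k : ℝ) * Real.Gamma (ν + 1)
          ≤ Real.Gamma (ν + k + 1) := gamma_ge ν hν k
        _ ≤ (Nat.factorial k : ℝ) * Real.Gamma (ν + k + 1) := by
            have hf1 : (1:ℝ) ≤ (Nat.factorial k : ℝ) := by
              exact_mod_cast Nat.one_le_iff_ne_zero.2 (Nat.factorial_ne_zero k)
            nlinarith
    have hcle : c ν k ≤ 1 / ((Nat.factorial k : ℝ) * Real.Gamma (ν + 1)) :=
      one_div_le_one_div_of_le (by positivity) hle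
    calc c ν k * x ^ k ≤ (1 / ((Nat.factorial k : ℝ) * Real.Gamma (ν + 1))) * x ^ k := by
          apply mul_le_mul_of_nonneg_right hcle (by positivity)
      _ = 1 / Real.Gamma (ν + 1) * (x ^ k / Nat.factorial k) := by
          rw [one_div, one_div, mul_inv, div_eq_mul_inv]; ring

lemma besselI_div (ν m : ℝ) (hν : 0 < ν) (hm : 0 < m) :
    besselI ν m / m ^ ν =
      (∑' k : ℕ, c ν k * ((m / 2) ^ 2) ^ k) * ((1:ℝ)/2) ^ ν := by
  have hm2 : 0 < m / 2 := by linarith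
  have hterm : ∀ k : ℕ, c ν k * (m / 2) ^ (2 * (k : ℝ) + ν) =
      (c ν k * ((m / 2) ^ 2) ^ k) * (m / 2) ^ ν := by
    intro k
    rw [Real.rpow_add hm2, show (2 * (k:ℝ)) = ((2 * k : ℕ) : ℝ) by push_cast; ring,
      Real.rpow_natCast, pow_mul]
    ring
  have h1 : besselI ν m = (∑' k : ℕ, c ν k * ((m / 2) ^ 2) ^ k) * (m / 2) ^ ν := by
    unfold besselI
    rw [← tsum_mul_right]
    exact tsum_congr hterm
  rw [h1, mul_div_assoc]
  congr 1
  rw [← Real.div_rpow (by positivity) hm.le]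
  congr 1
  field_simp

lemma ratio_pos (ν m : ℝ) (hν : 0 < ν) (hm : 0 < m) :
    0 < besselI ν m / m ^ ν := by
  rw [besselI_div ν m hν hm]
  have hx : (0:ℝ) ≤ (m/2)^2 := by positivity
  have hS : 0 < ∑' k : ℕ, c ν k * ((m / 2) ^ 2) ^ k := by
    apply Summable.tsum_pos (summable_S ν hν _ hx)
      (fun k => mul_nonneg (c_pos ν hν k).le (pow_nonneg hx k)) 0
    simpa using c_pos ν hν 0
  positivity

lemma ratio_lt (ν a b : ℝ) (hν : 0 < ν) (ha : 0 < a) (hab : a < b) :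
    besselI ν a / a ^ ν < besselI ν b / b ^ ν := by
  rw [besselI_div ν a hν ha, besselI_div ν b hν (ha.trans hab)]
  have hpow : (0:ℝ) < ((1:ℝ)/2) ^ ν := Real.rpow_pos_of_pos (by norm_num) ν
  apply mul_lt_mul_of_pos_right _ hpow
  have hxy : (a/2)^2 < (b/2)^2 := by nlinarith
  have hx : (0:ℝ) ≤ (a/2)^2 := by positivity
  have hy : (0:ℝ) ≤ (b/2)^2 := by positivity
  apply Summable.tsum_lt_tsum (i := 1)
    (fun k => mul_le_mul_of_nonneg_left (pow_le_pow_left₀ hx hxy.le k) (c_pos ν hν k).le)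
    _ (summable_S ν hν _ hx) (summable_S ν hν _ hy)
  simpa using mul_lt_mul_of_pos_left hxy (c_pos ν hν 1)

end BesselAux

theorem JhatT_strictMono (κ ν τ ws : ℝ)
    (hκ : 0 < κ) (hν : 0 < ν) (hτ : 0 < τ) (hws : ws ∈ Set.Icc (0:ℝ) 1) :
    StrictMonoOn (JhatT κ ν τ ws) (Set.Ioc (0:ℝ) 1) := by
  obtain ⟨hws0, hws1⟩ := hws
  intro s hs t ht hst
  have hs0 : 0 < s := hs.1
  have hconst : (0:ℝ) ≤ κ ^ 2 + 2 * κ * ws / τ := by positivity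
  have hMpos : ∀ u : ℝ, 0 < u → 0 < Mt κ τ ws u := by
    intro u hu
    apply Real.sqrt_pos.2
    have : 0 < u ^ 2 / τ ^ 2 := by positivity
    linarith
  have hMlt : Mt κ τ ws s < Mt κ τ ws t := by
    apply Real.sqrt_lt_sqrt (by positivity)
    have : s ^ 2 < t ^ 2 := by nlinarith
    have h2 : s ^ 2 / τ ^ 2 < t ^ 2 / τ ^ 2 := by
      rw [div_lt_div_iff₀ (by positivity) (by positivity)]
      nlinarith [pow_pos hτ 2]
    linarith
  have hlt := BesselAux.ratio_lt ν _ _ hν (hMpos s hs0) hMlt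
  have hpos := BesselAux.ratio_pos ν _ hν (hMpos s hs0)
  unfold JhatT
  have := Real.log_lt_log hpos hlt
  linarith
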